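/- Let β1, β2, L2 : ℝ² → ℝ be continuously differentiable on a neighborhood of the origin with β1(0,0) = β2(0,0) = 0, L2(0,0) = L0 ≠ 0, partial derivatives at the origin ∂β1/∂αᵢ(0) = cᵢ, ∂β2/∂αᵢ(0) = dᵢ, ∂L2/∂αᵢ(0) = lᵢ, and satisfying the degeneracy condition c1 d2 − c2 d1 = 0. Define S : ℝ² → ℝ² by S(α) = (β2(α)² − 4 β1(α) L2(α), β2(α) + L2(α) − L0). Then S admits a local C¹ inverse near the origin (i.e., S is a local diffeomorphism at (0,0)) if and only if c1 l2 − c2 l1 ≠ 0. -/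

import Mathlib

private lemma clm_apply2 (f : ℝ × ℝ →L[ℝ] ℝ) (x y : ℝ) :
    f (x, y) = x * f (1, 0) + y * f (0, 1) := by
  have h : (x, y) = x • ((1 : ℝ), (0 : ℝ)) + y • ((0 : ℝ), (1 : ℝ)) := by
    simp [Prod.ext_iff]
  rw [h, map_add, map_smul, map_smul, smul_eq_mul, smul_eq_mul]

/-- An explicit 2×2 invertible matrix as a continuous linear equiv of `ℝ × ℝ`. -/
private noncomputable def matEquiv (a b c d : ℝ) (h : a * d - b * c ≠ 0) :
    (ℝ × ℝ) ≃L[ℝ] (ℝ × ℝ) :=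
  LinearEquiv.toContinuousLinearEquiv
  { toFun := fun v => (a * v.1 + b * v.2, c * v.1 + d * v.2)
    map_add' := fun u v => by simp [Prod.ext_iff]; constructor <;> ring
    map_smul' := fun t v => by simp [Prod.ext_iff, Prod.smul_def, smul_eq_mul]; constructor <;> ring
    invFun := fun w => ((d * w.1 - b * w.2) / (a * d - b * c),
      (-c * w.1 + a * w.2) / (a * d - b * c))
    left_inv := fun v => by
      simp only [Prod.ext_iff]
      constructor <;> · rw [div_eq_iff h]; ring
    right_inv := fun w => by
      simp only [Prod.ext_iff]
      constructor <;> · rw [mul_div_assoc', mul_div_assoc', ← add_div, div_eq_iff h]; ring }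

private lemma matEquiv_apply (a b c d : ℝ) (h : a * d - b * c ≠ 0) (v : ℝ × ℝ) :
    matEquiv a b c d h v = (a * v.1 + b * v.2, c * v.1 + d * v.2) := rfl

theorem chenciner_new_transformation_regular_iff
    (β1 β2 L2 : ℝ × ℝ → ℝ) (L0 c1 c2 d1 d2 l1 l2 : ℝ)
    (hβ1C1 : ContDiffAt ℝ 1 β1 (0, 0))
    (hβ2C1 : ContDiffAt ℝ 1 β2 (0, 0))
    (hL2C1 : ContDiffAt ℝ 1 L2 (0, 0))
    (hβ10 : β1 (0, 0) = 0) (hβ20 : β2 (0, 0) = 0) (hL20 : L2 (0, 0) = L0)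
    (hL0 : L0 ≠ 0)
    (hc1 : fderiv ℝ β1 (0, 0) (1, 0) = c1)
    (hc2 : fderiv ℝ β1 (0, 0) (0, 1) = c2)
    (hd1 : fderiv ℝ β2 (0, 0) (1, 0) = d1)
    (hd2 : fderiv ℝ β2 (0, 0) (0, 1) = d2)
    (hl1 : fderiv ℝ L2 (0, 0) (1, 0) = l1)
    (hl2 : fderiv ℝ L2 (0, 0) (0, 1) = l2)
    (hdeg : c1 * d2 - c2 * d1 = 0)
    (S : ℝ × ℝ → ℝ × ℝ)
    (hS : ∀ α : ℝ × ℝ,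
      S α = (β2 α ^ 2 - 4 * β1 α * L2 α, β2 α + L2 α - L0)) :
    (∃ (T : ℝ × ℝ → ℝ × ℝ) (U V : Set (ℝ × ℝ)),
      IsOpen U ∧ IsOpen V ∧ (0, 0) ∈ U ∧ (0, 0) ∈ V ∧
      ContDiffOn ℝ 1 T V ∧
      Set.MapsTo S U V ∧ Set.MapsTo T V U ∧
      (∀ x ∈ U, T (S x) = x) ∧ (∀ y ∈ V, S (T y) = y)) ↔
    c1 * l2 - c2 * l1 ≠ 0 := by
  -- notation for the derivatives
  set P := fderiv ℝ β1 (0, 0) with hPdef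
  set Q := fderiv ℝ β2 (0, 0) with hQdef
  set R := fderiv ℝ L2 (0, 0) with hRdef
  have hP : HasFDerivAt β1 P (0, 0) := (hβ1C1.differentiableAt one_ne_zero).hasFDerivAt
  have hQ : HasFDerivAt β2 Q (0, 0) := (hβ2C1.differentiableAt one_ne_zero).hasFDerivAt
  have hR : HasFDerivAt L2 R (0, 0) := (hL2C1.differentiableAt one_ne_zero).hasFDerivAt
  have hSeq : S = fun α => (β2 α * β2 α - 4 * (β1 α * L2 α), β2 α + L2 α - L0) := by
    funext α
    rw [hS α]
    exact Prod.ext (by ring) rfl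
  have hS00 : S (0, 0) = (0, 0) := by
    rw [hS, hβ10, hβ20, hL20]; simp
  -- derivative of S at the origin
  set A : (ℝ × ℝ) →L[ℝ] ℝ × ℝ :=
    ((β2 (0, 0) • Q + β2 (0, 0) • Q - (4 : ℝ) • (β1 (0, 0) • R + L2 (0, 0) • P)).prod
      (Q + R)) with hAdef
  have hA : HasFDerivAt S A (0, 0) := by
    rw [hSeq]
    exact (((hQ.mul hQ).sub ((hP.mul hR).const_mul 4)).prodMk ((hQ.add hR).sub_const L0))
  have hAapp : ∀ x y : ℝ, A (x, y) =
      (-(4 * L0) * (c1 * x + c2 * y), (d1 + l1) * x + (d2 + l2) * y) := by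
    intro x y
    simp only [hAdef, ContinuousLinearMap.prod_apply, ContinuousLinearMap.add_apply,
      ContinuousLinearMap.sub_apply, ContinuousLinearMap.smul_apply, hβ10, hβ20, hL20,
      zero_smul, smul_eq_mul, zero_mul, zero_add, sub_zero, ContinuousLinearMap.zero_apply]
    rw [clm_apply2 P, clm_apply2 Q, clm_apply2 R, hc1, hc2, hd1, hd2, hl1, hl2]
    exact Prod.ext (by ring) (by ring)
  constructor
  · -- local inverse ⟹ regularity
    rintro ⟨T, U, V, hUo, hVo, hU0, hV0, hTC1, _, _, hTS, _⟩
    by_contra h0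
    -- a nonzero kernel vector of A
    have hker : ∃ v : ℝ × ℝ, v ≠ 0 ∧ A v = 0 := by
      by_cases hc : c1 = 0 ∧ c2 = 0
      · by_cases hm : d1 + l1 = 0 ∧ d2 + l2 = 0
        · refine ⟨(1, 0), by simp [Prod.ext_iff], ?_⟩
          rw [hAapp]
          have e1 : -(4 * L0) * (c1 * 1 + c2 * 0) = 0 := by rw [hc.1]; ring
          have e2 : (d1 + l1) * 1 + (d2 + l2) * 0 = 0 := by rw [hm.1]; ring
          rw [e1, e2]; rfl
        · refine ⟨(-(d2 + l2), d1 + l1), ?_, ?_⟩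
          · intro hv
            have h1 : -(d2 + l2) = 0 := congrArg Prod.fst hv
            have h2 : d1 + l1 = 0 := congrArg Prod.snd hv
            exact hm ⟨h2, neg_eq_zero.mp h1⟩
          · rw [hAapp]
            have e1 : -(4 * L0) * (c1 * -(d2 + l2) + c2 * (d1 + l1)) = 0 := by
              rw [hc.1, hc.2]; ring
            have e2 : (d1 + l1) * -(d2 + l2) + (d2 + l2) * (d1 + l1) = 0 := by ring
            rw [e1, e2]; rfl
      · refine ⟨(-c2, c1), ?_, ?_⟩
        · intro hv
          have h1 : -c2 = 0 := congrArg Prod.fst hv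
          have h2 : c1 = 0 := congrArg Prod.snd hv
          exact hc ⟨h2, neg_eq_zero.mp h1⟩
        · rw [hAapp]
          have e1 : -(4 * L0) * (c1 * -c2 + c2 * c1) = 0 := by ring
          have e2 : (d1 + l1) * -c2 + (d2 + l2) * c1 = 0 := by
            have h3 : (d1 + l1) * -c2 + (d2 + l2) * c1 =
                (c1 * d2 - c2 * d1) + (c1 * l2 - c2 * l1) := by ring
            rw [h3, hdeg, h0, add_zero]
          rw [e1, e2]; rfl
    obtain ⟨v, hv0, hvA⟩ := hker
    -- T is differentiable at S (0,0) = (0,0)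
    have hTd : DifferentiableAt ℝ T (0, 0) :=
      (hTC1.contDiffAt (hVo.mem_nhds hV0)).differentiableAt one_ne_zero
    have hcomp : HasFDerivAt (T ∘ S) ((fderiv ℝ T (0, 0)).comp A) (0, 0) := by
      refine HasFDerivAt.comp _ ?_ hA
      rw [hS00] at *
      exact hTd.hasFDerivAt
    have heq : (T ∘ S) =ᶠ[nhds ((0, 0) : ℝ × ℝ)] id := by
      filter_upwards [hUo.mem_nhds hU0] with x hx
      exact hTS x hx
    have hid : HasFDerivAt (T ∘ S) (ContinuousLinearMap.id ℝ (ℝ × ℝ)) (0, 0) :=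
      (hasFDerivAt_id _).congr_of_eventuallyEq heq
    have huniq : (fderiv ℝ T (0, 0)).comp A = ContinuousLinearMap.id ℝ (ℝ × ℝ) :=
      hcomp.unique hid
    have : v = 0 := by
      have h1 : (fderiv ℝ T (0, 0)).comp A v = v := by rw [huniq]; rfl
      rw [ContinuousLinearMap.comp_apply, hvA, map_zero] at h1
      exact h1.symm
    exact hv0 this
  · -- regularity ⟹ local inverse
    intro hne
    have hΔ : -(4 * L0) * c1 * (d2 + l2) - -(4 * L0) * c2 * (d1 + l1) ≠ 0 := by
      have : -(4 * L0) * c1 * (d2 + l2) - -(4 * L0) * c2 * (d1 + l1) =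
          -(4 * L0) * ((c1 * d2 - c2 * d1) + (c1 * l2 - c2 * l1)) := by ring
      rw [this, hdeg, zero_add]
      exact mul_ne_zero (by simpa using hL0) hne
    set e : (ℝ × ℝ) ≃L[ℝ] ℝ × ℝ :=
      matEquiv (-(4 * L0) * c1) (-(4 * L0) * c2) (d1 + l1) (d2 + l2) hΔ with hedef
    have hAe : A = (e : (ℝ × ℝ) →L[ℝ] ℝ × ℝ) := by
      apply ContinuousLinearMap.ext
      intro v
      have h1 : (e : (ℝ × ℝ) →L[ℝ] ℝ × ℝ) v =
          ((-(4 * L0) * c1) * v.1 + (-(4 * L0) * c2) * v.2,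
            (d1 + l1) * v.1 + (d2 + l2) * v.2) := rfl
      rw [show A v = A (v.1, v.2) from rfl, hAapp, h1]
      exact Prod.ext (by ring) rfl
    have hA' : HasFDerivAt S (e : (ℝ × ℝ) →L[ℝ] ℝ × ℝ) (0, 0) := hAe ▸ hA
    have hSC1 : ContDiffAt ℝ 1 S (0, 0) := by
      rw [hSeq]
      exact ((hβ2C1.mul hβ2C1).sub (contDiffAt_const.mul (hβ1C1.mul hL2C1))).prodMk
        ((hβ2C1.add hL2C1).sub contDiffAt_const)
    -- inverse function theorem
    set Φ := hSC1.toOpenPartialHomeomorph S hA' one_ne_zero with hΦdef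
    have hΦcoe : (Φ : ℝ × ℝ → ℝ × ℝ) = S := rfl
    have hsrc : (0, 0) ∈ Φ.source := hSC1.mem_toOpenPartialHomeomorph_source hA' one_ne_zero
    have htgt : ((0, 0) : ℝ × ℝ) ∈ Φ.target := by
      have := hSC1.image_mem_toOpenPartialHomeomorph_target hA' one_ne_zero
      rwa [hS00] at this
    have hinv : ContDiffAt ℝ 1 Φ.symm (0, 0) := by
      have := hSC1.to_localInverse hA' one_ne_zero
      rw [hS00] at this
      exact this
    obtain ⟨u, hu, hcd⟩ := hinv.contDiffOn le_rfl (by norm_num)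
    obtain ⟨W, hWu, hWo, hW0⟩ := mem_nhds_iff.mp hu
    refine ⟨Φ.symm, Φ.source ∩ S ⁻¹' (Φ.target ∩ W), Φ.target ∩ W, ?_, ?_, ?_, ?_, ?_, ?_, ?_, ?_, ?_⟩
    · rw [← hΦcoe]
      exact Φ.isOpen_inter_preimage (Φ.open_target.inter hWo)
    · exact Φ.open_target.inter hWo
    · exact ⟨hsrc, by rw [Set.mem_preimage, hS00]; exact ⟨htgt, hW0⟩⟩
    · exact ⟨htgt, hW0⟩
    · exact (hcd.mono hWu).mono Set.inter_subset_right
    · exact fun x hx => hx.2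
    · rintro y ⟨hy, hyW⟩
      refine ⟨Φ.map_target hy, ?_⟩
      rw [Set.mem_preimage, ← hΦcoe, Φ.right_inv hy]
      exact ⟨hy, hyW⟩
    · rintro x ⟨hx, _⟩
      rw [← hΦcoe]
      exact Φ.left_inv hx
    · rintro y ⟨hy, _⟩
      rw [← hΦcoe]
      exact Φ.right_inv hy
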